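/- Let σ : S¹ → ℝ² be an arc-length parametrized C¹ simple closed curve of length L, and suppose σ is C² with ‖σ''‖ ≤ κ everywhere. Then L ≥ 2π/κ. -/

import Mathlib

set_option maxHeartbeats 1000000 in
/-- A simple closed unit-speed `C²` plane curve of length `L` with `‖σ''‖ ≤ κ` satisfies
`L ≥ 2π/κ`. -/
theorem loop_length_lower_bound (κ L : ℝ) (hκ : 0 < κ) (hL : 0 < L)
    (σ v a : ℝ → EuclideanSpace ℝ (Fin 2))
    (hper : Function.Periodic σ L) (hvper : Function.Periodic v L)
    (hderiv : ∀ t, HasDerivAt σ (v t) t)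
    (hderiv2 : ∀ t, HasDerivAt v (a t) t)
    (hacont : Continuous a)
    (hunit : ∀ t, ‖v t‖ = 1)
    (hcurv : ∀ t, ‖a t‖ ≤ κ)
    (hinj : Set.InjOn σ (Set.Ico 0 L)) :
    2 * Real.pi / κ ≤ L := by
  set x : ℝ → ℝ := fun t => v t 0 with hxdef
  set y : ℝ → ℝ := fun t => v t 1 with hydef
  set p : ℝ → ℝ := fun t => a t 0 with hpdef
  set q : ℝ → ℝ := fun t => a t 1 with hqdef
  have hdx : ∀ t, HasDerivAt x (p t) t := fun t => by
    simpa [Function.comp_def] using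
      (EuclideanSpace.proj (0 : Fin 2)).hasFDerivAt.comp_hasDerivAt t (hderiv2 t)
  have hdy : ∀ t, HasDerivAt y (q t) t := fun t => by
    simpa [Function.comp_def] using
      (EuclideanSpace.proj (1 : Fin 2)).hasFDerivAt.comp_hasDerivAt t (hderiv2 t)
  have hdσx : ∀ t, HasDerivAt (fun s => σ s 0) (x t) t := fun t => by
    simpa [Function.comp_def] using
      (EuclideanSpace.proj (0 : Fin 2)).hasFDerivAt.comp_hasDerivAt t (hderiv t)
  have hdσy : ∀ t, HasDerivAt (fun s => σ s 1) (y t) t := fun t => by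
    simpa [Function.comp_def] using
      (EuclideanSpace.proj (1 : Fin 2)).hasFDerivAt.comp_hasDerivAt t (hderiv t)
  have hxcont : Continuous x := continuous_iff_continuousAt.mpr fun t => (hdx t).continuousAt
  have hycont : Continuous y := continuous_iff_continuousAt.mpr fun t => (hdy t).continuousAt
  have hpcont : Continuous p := (EuclideanSpace.proj (0 : Fin 2)).continuous.comp hacont
  have hqcont : Continuous q := (EuclideanSpace.proj (1 : Fin 2)).continuous.comp hacont
  -- unit speed in coordinates
  have hxy : ∀ t, x t ^ 2 + y t ^ 2 = 1 := fun t => by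
    have h := EuclideanSpace.norm_eq (v t)
    rw [hunit t] at h
    have h2 := Real.sqrt_eq_one.mp h.symm
    simpa [Fin.sum_univ_two, sq_abs] using h2
  have hanorm : ∀ t, p t ^ 2 + q t ^ 2 = ‖a t‖ ^ 2 := fun t => by
    have h := EuclideanSpace.norm_eq (a t)
    rw [h, Real.sq_sqrt (by positivity)]
    simp [Fin.sum_univ_two, sq_abs]; rfl
  -- orthogonality : x p + y q = 0
  have hortho : ∀ t, x t * p t + y t * q t = 0 := fun t => by
    have h1 : HasDerivAt (fun t => x t ^ 2 + y t ^ 2)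
        (2 * x t * p t + 2 * y t * q t) t := by
      have := ((hdx t).fun_pow 2).fun_add ((hdy t).fun_pow 2)
      exact this.congr_deriv (by ring)
    have h2 : HasDerivAt (fun t => x t ^ 2 + y t ^ 2) 0 t := by
      have he : (fun t => x t ^ 2 + y t ^ 2) = fun _ => (1:ℝ) := funext hxy
      rw [he]; exact hasDerivAt_const t 1
    have := h1.unique h2
    linarith
  -- signed curvature
  set ω : ℝ → ℝ := fun t => x t * q t - y t * p t with hωdef
  have hωcont : Continuous ω := ((hxcont.mul hqcont).sub (hycont.mul hpcont))
  have hp' : ∀ t, p t = -(y t) * ω t := fun t => by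
    have h1 := hortho t; have h2 := hxy t
    simp only [hωdef]
    linear_combination x t * h1 - p t * h2
  have hq' : ∀ t, q t = x t * ω t := fun t => by
    have h1 := hortho t; have h2 := hxy t
    simp only [hωdef]
    linear_combination y t * h1 - q t * h2
  have hωbound : ∀ t, |ω t| ≤ κ := fun t => by
    have h1 := hxy t; have h2 := hanorm t
    have h3 : ω t ^ 2 ≤ ‖a t‖ ^ 2 := by
      simp only [hωdef]
      nlinarith [sq_nonneg (x t * p t + y t * q t), sq_nonneg (p t), sq_nonneg (q t)]
    have : |ω t| ≤ ‖a t‖ := by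
      nlinarith [abs_nonneg (ω t), norm_nonneg (a t), sq_abs (ω t)]
    exact this.trans (hcurv t)
  -- initial angle
  obtain ⟨θ₀, hθ₀c, hθ₀s⟩ : ∃ θ₀ : ℝ, Real.cos θ₀ = x 0 ∧ Real.sin θ₀ = y 0 := by
    have h := hxy 0
    have hz : (⟨x 0, y 0⟩ : ℂ) ≠ 0 := by
      intro hc
      rw [Complex.ext_iff] at hc
      simp at hc
      nlinarith [hc.1, hc.2]
    have habs : ‖(⟨x 0, y 0⟩ : ℂ)‖ = 1 := by
      simp [Complex.norm_def, Complex.normSq_mk]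
      nlinarith
    refine ⟨Complex.arg ⟨x 0, y 0⟩, ?_, ?_⟩
    · have := Complex.cos_arg hz; rw [habs] at this; simpa using this
    · have := Complex.sin_arg (⟨x 0, y 0⟩ : ℂ); rw [habs] at this; simpa using this
  -- angle function
  set θ : ℝ → ℝ := fun t => θ₀ + ∫ s in (0:ℝ)..t, ω s with hθdef
  have hθd : ∀ t, HasDerivAt θ (ω t) t := fun t =>
    ((hωcont.integral_hasStrictDerivAt 0 t).hasDerivAt).const_add θ₀
  have hθcont : Continuous θ := continuous_iff_continuousAt.mpr fun t => (hθd t).continuousAt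
  have hθ0 : θ 0 = θ₀ := by simp [hθdef]
  -- v = (cos θ, sin θ)
  have hkey : ∀ t, x t = Real.cos (θ t) ∧ y t = Real.sin (θ t) := by
    set f : ℝ → ℝ := fun t => x t * Real.cos (θ t) + y t * Real.sin (θ t) with hfdef
    have hfd : ∀ t, HasDerivAt f 0 t := fun t => by
      have hc : HasDerivAt (fun t => Real.cos (θ t)) (-Real.sin (θ t) * ω t) t :=
        (Real.hasDerivAt_cos (θ t)).comp t (hθd t)
      have hs : HasDerivAt (fun t => Real.sin (θ t)) (Real.cos (θ t) * ω t) t :=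
        (Real.hasDerivAt_sin (θ t)).comp t (hθd t)
      have h := ((hdx t).mul hc).add ((hdy t).mul hs)
      have he : p t * Real.cos (θ t) + x t * (-Real.sin (θ t) * ω t) +
          (q t * Real.sin (θ t) + y t * (Real.cos (θ t) * ω t)) = 0 := by
        rw [hp' t, hq' t]; ring
      rw [he] at h
      exact h
    have hfc : ∀ t, f t = f 0 := by
      intro t
      have : ∀ s, deriv f s = 0 := fun s => (hfd s).deriv
      exact is_const_of_deriv_eq_zero (fun s => (hfd s).differentiableAt) this t 0
    have hf0 : f 0 = 1 := by
      simp only [hfdef, hθ0]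
      rw [hθ₀c, hθ₀s]; linear_combination hxy 0
    intro t
    have h1 : f t = 1 := (hfc t).trans hf0
    simp only [hfdef] at h1
    have h2 := hxy t
    have h3 := Real.sin_sq_add_cos_sq (θ t)
    have h4 : (x t - Real.cos (θ t)) ^ 2 + (y t - Real.sin (θ t)) ^ 2 = 0 := by
      nlinarith [h1, h2, h3]
    have h5 : x t - Real.cos (θ t) = 0 := by
      have h6 : (x t - Real.cos (θ t)) ^ 2 = 0 :=
        le_antisymm (by nlinarith [sq_nonneg (y t - Real.sin (θ t))]) (sq_nonneg _)
      exact pow_eq_zero_iff two_ne_zero |>.mp h6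
    have h7 : y t - Real.sin (θ t) = 0 := by
      have h8 : (y t - Real.sin (θ t)) ^ 2 = 0 :=
        le_antisymm (by nlinarith [sq_nonneg (x t - Real.cos (θ t))]) (sq_nonneg _)
      exact pow_eq_zero_iff two_ne_zero |>.mp h8
    exact ⟨by linarith, by linarith⟩
  -- closed curve: integral of tangent vanishes
  have hintx : ∫ t in (0:ℝ)..L, Real.cos (θ t) = 0 := by
    have h : ∫ t in (0:ℝ)..L, x t = σ L 0 - σ 0 0 :=
      intervalIntegral.integral_eq_sub_of_hasDerivAt (fun t _ => hdσx t)
        (hxcont.intervalIntegrable 0 L)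
    have hσ : σ L = σ 0 := by simpa using hper 0
    rw [hσ, sub_self] at h
    rw [show (∫ t in (0:ℝ)..L, Real.cos (θ t)) = ∫ t in (0:ℝ)..L, x t from
      intervalIntegral.integral_congr fun t _ => ((hkey t).1).symm, h]
  have hinty : ∫ t in (0:ℝ)..L, Real.sin (θ t) = 0 := by
    have h : ∫ t in (0:ℝ)..L, y t = σ L 1 - σ 0 1 :=
      intervalIntegral.integral_eq_sub_of_hasDerivAt (fun t _ => hdσy t)
        (hycont.intervalIntegrable 0 L)
    have hσ : σ L = σ 0 := by simpa using hper 0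
    rw [hσ, sub_self] at h
    rw [show (∫ t in (0:ℝ)..L, Real.sin (θ t)) = ∫ t in (0:ℝ)..L, y t from
      intervalIntegral.integral_congr fun t _ => ((hkey t).2).symm, h]
  -- Lipschitz bound on θ
  have hθint : ∀ s u : ℝ, θ u - θ s = ∫ r in s..u, ω r := fun s u => by
    have := intervalIntegral.integral_eq_sub_of_hasDerivAt (f := θ) (f' := ω)
      (fun r _ => hθd r) (hωcont.intervalIntegrable s u)
    linarith [this]
  have hlip : ∀ s u : ℝ, s ≤ u → |θ u - θ s| ≤ κ * (u - s) := fun s u hsu => by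
    rw [hθint s u]
    have := intervalIntegral.norm_integral_le_of_norm_le_const
      (C := κ) (f := ω) (a := s) (b := u) (fun r _ => by simpa using hωbound r)
    rwa [abs_of_nonneg (by linarith), Real.norm_eq_abs] at this
  clear_value x y p q ω θ
  -- max and min of θ on [0, L]
  have hcpt : IsCompact (Set.Icc (0:ℝ) L) := isCompact_Icc
  have hne : (Set.Icc (0:ℝ) L).Nonempty := ⟨0, le_refl 0, le_of_lt hL⟩
  obtain ⟨u₁, hu₁mem, hu₁⟩ := hcpt.exists_isMaxOn hne hθcont.continuousOn
  obtain ⟨u₂, hu₂mem, hu₂⟩ := hcpt.exists_isMinOn hne hθcont.continuousOn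
  have hmax : ∀ t ∈ Set.Icc (0:ℝ) L, θ t ≤ θ u₁ := fun t ht => hu₁ ht
  have hmin : ∀ t ∈ Set.Icc (0:ℝ) L, θ u₂ ≤ θ t := fun t ht => hu₂ ht
  -- diameter at least π
  have hD : Real.pi ≤ θ u₁ - θ u₂ := by
    by_contra hcon
    push_neg at hcon
    set c := (θ u₁ + θ u₂) / 2 with hcdef
    set D := θ u₁ - θ u₂ with hDdef
    have hD0 : 0 ≤ D := by
      have := hmax u₂ hu₂mem
      simp only [hDdef]; linarith
    have hDlt : D / 2 < Real.pi / 2 := by linarith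
    have hcospos : 0 < Real.cos (D / 2) :=
      Real.cos_pos_of_mem_Ioo ⟨by linarith [Real.pi_pos], hDlt⟩
    have hbound : ∀ t ∈ Set.Icc (0:ℝ) L, Real.cos (D / 2) ≤ Real.cos (θ t - c) := by
      intro t ht
      have h1 := hmax t ht
      have h2 := hmin t ht
      have habs : |θ t - c| ≤ D / 2 := by
        rw [abs_le]; constructor <;> (simp only [hcdef, hDdef]; linarith)
      calc Real.cos (D / 2) ≤ Real.cos |θ t - c| :=
            Real.cos_le_cos_of_nonneg_of_le_pi (abs_nonneg _)
              (by linarith [Real.pi_pos]) habs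
        _ = Real.cos (θ t - c) := by rw [Real.cos_abs]
    have hI : ∫ t in (0:ℝ)..L, Real.cos (θ t - c) = 0 := by
      have : ∀ t, Real.cos (θ t - c) =
          Real.cos (θ t) * Real.cos c + Real.sin (θ t) * Real.sin c := fun t => by
        rw [Real.cos_sub]
      simp_rw [this]
      rw [intervalIntegral.integral_add, intervalIntegral.integral_mul_const,
        intervalIntegral.integral_mul_const, hintx, hinty]
      · ring
      · exact ((Real.continuous_cos.comp hθcont).mul continuous_const).intervalIntegrable 0 L
      · exact ((Real.continuous_sin.comp hθcont).mul continuous_const).intervalIntegrable 0 L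
    have hge : L * Real.cos (D / 2) ≤ ∫ t in (0:ℝ)..L, Real.cos (θ t - c) := by
      have := intervalIntegral.integral_mono_on (le_of_lt hL)
        (intervalIntegrable_const (c := Real.cos (D / 2)) (μ := MeasureTheory.volume) (a := 0) (b := L))
        (((Real.continuous_cos.comp (hθcont.sub continuous_const))).intervalIntegrable 0 L)
        hbound
      simpa using this
    rw [hI] at hge
    nlinarith
  -- θ L - θ 0 is a multiple of 2π
  have hvL : v L = v 0 := by simpa using hvper 0
  obtain ⟨n, hn⟩ : ∃ n : ℤ, θ L - θ 0 = n * (2 * Real.pi) := by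
    have hcL : Real.cos (θ L) = Real.cos (θ 0) := by
      rw [← (hkey L).1, ← (hkey 0).1]; simp only [hxdef]; rw [hvL]
    have hsL : Real.sin (θ L) = Real.sin (θ 0) := by
      rw [← (hkey L).2, ← (hkey 0).2]; simp only [hydef]; rw [hvL]
    have h : Real.cos (θ L - θ 0) = 1 := by
      rw [Real.cos_sub, hcL, hsL]; linear_combination Real.sin_sq_add_cos_sq (θ 0)
    obtain ⟨m, hm⟩ := (Real.cos_eq_one_iff _).mp h
    exact ⟨m, by linarith⟩
  -- conclude
  have hgoal : 2 * Real.pi ≤ κ * L := by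
    rcases eq_or_ne n 0 with hn0 | hn0
    · -- θ L = θ 0 ; use max/min
      have hθL0 : θ L = θ 0 := by rw [hn0] at hn; push_cast at hn; linarith
      have h0mem : (0:ℝ) ∈ Set.Icc (0:ℝ) L := ⟨le_refl 0, le_of_lt hL⟩
      have hLmem : L ∈ Set.Icc (0:ℝ) L := ⟨le_of_lt hL, le_refl L⟩
      rcases le_total u₁ u₂ with hu | hu
      · have h1 := hlip 0 u₁ hu₁mem.1
        have h2 := hlip u₁ u₂ hu
        have h3 := hlip u₂ L hu₂mem.2
        rw [abs_sub_comm] at h2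
        have e1 : θ u₁ - θ 0 ≤ |θ u₁ - θ 0| := le_abs_self _
        have e2 : θ u₁ - θ u₂ ≤ |θ u₁ - θ u₂| := le_abs_self _
        have e3 : θ L - θ u₂ ≤ |θ L - θ u₂| := le_abs_self _
        have hm1 := hmax 0 h0mem
        have hm2 := hmin L hLmem
        linarith
      · have h1 := hlip 0 u₂ hu₂mem.1
        have h2 := hlip u₂ u₁ hu
        have h3 := hlip u₁ L hu₁mem.2
        have e1 : θ 0 - θ u₂ ≤ |θ u₂ - θ 0| := by rw [abs_sub_comm]; exact le_abs_self _
        have e2 : θ u₁ - θ u₂ ≤ |θ u₁ - θ u₂| := le_abs_self _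
        have e3 : θ u₁ - θ L ≤ |θ L - θ u₁| := by rw [abs_sub_comm]; exact le_abs_self _
        have hm1 := hmin 0 h0mem
        have hm2 := hmax L hLmem
        linarith
    · have h1 := hlip 0 L (le_of_lt hL)
      have h2 : (1:ℝ) ≤ |(n:ℝ)| := by
        rw [← Int.cast_abs]
        exact_mod_cast Int.one_le_abs hn0
      have h3 : |θ L - θ 0| = |(n:ℝ)| * (2 * Real.pi) := by
        rw [hn, abs_mul, abs_of_nonneg (by positivity : (0:ℝ) ≤ 2 * Real.pi)]
      nlinarith [Real.pi_pos]
  rw [div_le_iff₀ hκ]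
  linarith [hgoal, mul_comm κ L]
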